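/- Let a = 2π/(ln 2 − γ), where γ is the Euler–Mascheroni constant, and let c < 0. Consider the equation ln(1+λ)/(4π) = 1/a − 1/(a + cε − ε²·(ln λ/(4π) − 1/a)) for λ > 0. Then there exists ε₀ > 0 such that for all 0 < ε < ε₀ the equation has exactly two solutions: one solution lies in (λ_{a,ε}, ∞) with λ_{a,ε} = exp[4π(a/ε² − |c|/ε + 1/a)], and the other solution λ_ε lies in (0, exp[4π(−|c|/ε + 1/a)]). In particular −exp(−4π|c|/ε + 4π/a) < −λ_ε < 0. -/

import Mathlib

set_option maxHeartbeats 1000000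

open Real Set

theorem two_eigenvalues_d2_theta0_zero (a c : ℝ)
    (ha : a = 2 * Real.pi / (Real.log 2 - Real.eulerMascheroniConstant))
    (hc : c < 0) :
    ∃ ε₀ > (0 : ℝ), ∀ ε : ℝ, 0 < ε → ε < ε₀ →
      ∃ lam₁ lam₂ : ℝ,
        Real.exp (4 * Real.pi * (a / ε ^ 2 - |c| / ε + 1 / a)) < lam₁ ∧
        0 < lam₂ ∧ lam₂ < Real.exp (4 * Real.pi * (-|c| / ε + 1 / a)) ∧
        Real.log (1 + lam₁) / (4 * Real.pi) =
          1 / a - 1 / (a + c * ε - ε ^ 2 * (Real.log lam₁ / (4 * Real.pi) - 1 / a)) ∧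
        Real.log (1 + lam₂) / (4 * Real.pi) =
          1 / a - 1 / (a + c * ε - ε ^ 2 * (Real.log lam₂ / (4 * Real.pi) - 1 / a)) ∧
        lam₁ ≠ lam₂ ∧
        (∀ lam : ℝ, 0 < lam →
          Real.log (1 + lam) / (4 * Real.pi) =
            1 / a - 1 / (a + c * ε - ε ^ 2 * (Real.log lam / (4 * Real.pi) - 1 / a)) →
          lam = lam₁ ∨ lam = lam₂) ∧
        -Real.exp (-(4 * Real.pi * |c|) / ε + 4 * Real.pi / a) < -lam₂ ∧ -lam₂ < 0 := by
  have hpi : (0:ℝ) < Real.pi := Real.pi_pos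
  have hγ : Real.eulerMascheroniConstant < Real.log 2 :=
    (Real.eulerMascheroniConstant_lt_two_thirds.trans
      (by norm_num : (2:ℝ)/3 < 0.6931471803)).trans Real.log_two_gt_d9
  have ha0 : 0 < a := by
    rw [ha]; exact div_pos (by positivity) (sub_pos.mpr hγ)
  set C' : ℝ := (Real.log 2 + 2*Real.pi/a)/(4*Real.pi) with hC'def
  have hC' : 0 < C' := by
    have h2 : 0 < Real.log 2 := Real.log_pos (by norm_num)
    positivity
  clear_value C'
  refine ⟨min (a/(-c)) (Real.sqrt (a/C')), lt_min (div_pos ha0 (by linarith)) (Real.sqrt_pos.mpr (div_pos ha0 hC')), ?_⟩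
  intro ε hε hεlt
  have hεne : ε ≠ 0 := hε.ne'
  have h1 : 0 < a + c*ε := by
    have h := hεlt.trans_le (min_le_left _ _)
    rw [lt_div_iff₀ (by linarith : (0:ℝ) < -c)] at h
    have : ε * -c = -(c * ε) := by ring
    linarith
  have h2 : C' * ε^2 < a := by
    have h := hεlt.trans_le (min_le_right _ _)
    have := (Real.lt_sqrt hε.le).mp h
    calc C' * ε^2 < C' * (a/C') := by
          exact mul_lt_mul_of_pos_left this hC'
      _ = a := by field_simp

  -- the denominator and the difference function
  set D : ℝ → ℝ := fun l => a + c * ε - ε ^ 2 * (Real.log l / (4 * Real.pi) - 1 / a) with hDdef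
  set F : ℝ → ℝ := fun l => Real.log (1 + l) / (4 * Real.pi) - 1 / a + 1 / D l with hFdef
  have hpi4 : (0:ℝ) < 4 * Real.pi := by positivity
  have hDe : ∀ x : ℝ, D (Real.exp x) = a + c * ε + ε ^ 2 / a - ε ^ 2 * x / (4 * Real.pi) := by
    intro x
    simp only [hDdef, Real.log_exp]
    field_simp
    ring
  -- equation ↔ F = 0
  have hEq : ∀ l : ℝ, (Real.log (1 + l) / (4 * Real.pi) =
      1 / a - 1 / (a + c * ε - ε ^ 2 * (Real.log l / (4 * Real.pi) - 1 / a))) ↔ F l = 0 := by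
    intro l
    simp only [hFdef, hDdef]
    constructor <;> intro h <;> linarith
  -- D is antitone on (0, ∞)
  have hanti : ∀ l m : ℝ, 0 < l → l ≤ m → D m ≤ D l := by
    intro l m hl hlm
    have hlog := Real.log_le_log hl hlm
    have : ε ^ 2 * (Real.log l / (4 * Real.pi)) ≤ ε ^ 2 * (Real.log m / (4 * Real.pi)) := by
      gcongr
    simp only [hDdef]
    linarith
  have hantis : ∀ l m : ℝ, 0 < l → l < m → D m < D l := by
    intro l m hl hlm
    have hlog := Real.log_lt_log hl hlm
    have : ε ^ 2 * (Real.log l / (4 * Real.pi)) < ε ^ 2 * (Real.log m / (4 * Real.pi)) := by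
      gcongr
    simp only [hDdef]
    linarith
  -- F is strictly increasing where D has a constant sign
  have hFmono : ∀ l m : ℝ, 0 < l → l < m → (0 < D m ∨ D l < 0) → F l < F m := by
    intro l m hl hlm hsign
    have hD := hantis l m hl hlm
    have hll : Real.log (1 + l) < Real.log (1 + m) :=
      Real.log_lt_log (by linarith) (by linarith)
    have hlog : Real.log (1 + l) / (4 * Real.pi) < Real.log (1 + m) / (4 * Real.pi) := by
      gcongr
    have hdiv : 1 / D l < 1 / D m := by
      rcases hsign with h | h
      · exact one_div_lt_one_div_of_lt h hD
      · exact one_div_lt_one_div_of_neg_of_lt h hD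
    simp only [hFdef]; linarith
  -- continuity of F where l > 0 and D l ≠ 0
  have hFc : ∀ s : Set ℝ, (∀ l ∈ s, 0 < l ∧ D l ≠ 0) → ContinuousOn F s := by
    intro s hs
    apply continuousOn_of_forall_continuousAt
    intro l hl
    obtain ⟨hl0, hD⟩ := hs l hl
    have h1 : ContinuousAt (fun l : ℝ => Real.log (1 + l)) l :=
      (Real.continuousAt_log (by linarith)).comp (by fun_prop)
    have h2 : ContinuousAt D l := by
      have hlog : ContinuousAt Real.log l := Real.continuousAt_log hl0.ne'
      simp only [hDdef]
      fun_prop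
    exact ((h1.div_const _).sub continuousAt_const).add (continuousAt_const.div h2 hD)
  -- key points
  set lstar : ℝ := 4 * Real.pi * (a / ε ^ 2 + c / ε + 1 / a) with hlstardef
  have hlstar_pos : 4 * Real.pi / a < lstar := by
    have : 0 < (a + c * ε) / ε ^ 2 := div_pos h1 (by positivity)
    have h' : 0 < a / ε ^ 2 + c / ε := by
      have : (a + c * ε) / ε ^ 2 = a / ε ^ 2 + c / ε := by field_simp
      linarith [this ▸ ‹0 < (a + c * ε) / ε ^ 2›]
    have h'' : 0 < 4 * Real.pi * (a / ε ^ 2 + c / ε) := mul_pos hpi4 h'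
    have hrw : lstar = 4 * Real.pi * (a / ε ^ 2 + c / ε) + 4 * Real.pi / a := by
      rw [hlstardef]; ring
    linarith
  have hlstar0 : 0 < lstar := lt_trans (by positivity) hlstar_pos
  set M : ℝ := Real.exp (4 * Real.pi * (c / ε + 1 / a)) with hMdef
  set x0 : ℝ := min (4 * Real.pi / a - 4 * Real.pi * (a - c * ε) / ε ^ 2 - 1)
      (Real.log (2 * Real.pi / a) - 1) with hx0def
  set l0 : ℝ := Real.exp x0 with hl0def
  set l1 : ℝ := Real.exp (lstar + 2 * Real.pi / a) with hl1def
  set l2 : ℝ := Real.exp (lstar + 1 + 4 * Real.pi / a + 16 * Real.pi ^ 2 / ε ^ 2) with hl2def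
  -- values of D at the key points
  have hDM : D M = a := by
    rw [hMdef, hDe]; field_simp; ring
  have hDl0 : 2 * a ≤ D l0 := by
    have hx0 : x0 ≤ 4 * Real.pi / a - 4 * Real.pi * (a - c * ε) / ε ^ 2 - 1 := min_le_left _ _
    have key : ε ^ 2 * (4 * Real.pi / a - 4 * Real.pi * (a - c * ε) / ε ^ 2 - 1) / (4 * Real.pi)
        = ε ^ 2 / a - (a - c * ε) - ε ^ 2 / (4 * Real.pi) := by
      field_simp
    have hmon : ε ^ 2 * x0 / (4 * Real.pi) ≤
        ε ^ 2 * (4 * Real.pi / a - 4 * Real.pi * (a - c * ε) / ε ^ 2 - 1) / (4 * Real.pi) := by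
      gcongr
    rw [hl0def, hDe]
    have hq : 0 < ε ^ 2 / (4 * Real.pi) := by positivity
    linarith [key ▸ hmon]
  have hDl1 : D l1 = -(ε ^ 2 / (2 * a)) := by
    rw [hl1def, hDe, hlstardef]; field_simp; ring
  have hDl1neg : D l1 < 0 := by
    rw [hDl1]
    have : 0 < ε ^ 2 / (2 * a) := by positivity
    linarith
  clear_value D F lstar M x0 l0 l1 l2
  have hDl2 : D l2 = -(ε ^ 2 * (1 + 4 * Real.pi / a)) / (4 * Real.pi) - 4 * Real.pi := by
    rw [hl2def, hDe, hlstardef]; field_simp; ring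
  have hDl2le : D l2 ≤ -(4 * Real.pi) := by
    rw [hDl2]
    have h1' : 0 ≤ ε ^ 2 * (1 + 4 * Real.pi / a) / (4 * Real.pi) := by positivity
    have h2' : -(ε ^ 2 * (1 + 4 * Real.pi / a)) / (4 * Real.pi)
        = -(ε ^ 2 * (1 + 4 * Real.pi / a) / (4 * Real.pi)) := by ring
    linarith [h2' ▸ le_refl (-(ε ^ 2 * (1 + 4 * Real.pi / a)) / (4 * Real.pi))]
  -- F at the key points
  have hl0pos : 0 < l0 := by rw [hl0def]; exact Real.exp_pos _
  have hl1pos : 0 < l1 := by rw [hl1def]; exact Real.exp_pos _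
  have hMpos : 0 < M := by rw [hMdef]; exact Real.exp_pos _
  have hFl0 : F l0 < 0 := by
    have hDl0pos : 0 < D l0 := by linarith
    have hdle : 1 / D l0 ≤ 1 / (2 * a) := one_div_le_one_div_of_le (by linarith) hDl0
    have hlog : Real.log (1 + l0) ≤ l0 := by
      have := Real.log_le_sub_one_of_pos (show (0:ℝ) < 1 + l0 by linarith)
      linarith
    have hl0small : l0 < 2 * Real.pi / a := by
      have hx0le : x0 ≤ Real.log (2 * Real.pi / a) - 1 := by rw [hx0def]; exact min_le_right _ _
      calc l0 = Real.exp x0 := hl0def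
        _ < Real.exp (Real.log (2 * Real.pi / a)) := Real.exp_lt_exp.mpr (by linarith)
        _ = 2 * Real.pi / a := Real.exp_log (by positivity)
    have hnum : Real.log (1 + l0) < 2 * Real.pi / a := lt_of_le_of_lt hlog hl0small
    have hkey : Real.log (1 + l0) / (4 * Real.pi) < (2 * Real.pi / a) / (4 * Real.pi) := by
      gcongr
    have hval : (2 * Real.pi / a) / (4 * Real.pi) = 1 / (2 * a) := by field_simp; ring
    have hsum : 1 / (2 * a) + 1 / (2 * a) = 1 / a := by
      field_simp [ha0.ne']
      ring
    simp only [hFdef]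
    linarith
  have hFM : 0 < F M := by
    have hlogM : 0 < Real.log (1 + M) := Real.log_pos (by linarith)
    have : 0 < Real.log (1 + M) / (4 * Real.pi) := by positivity
    simp only [hFdef]
    rw [hDM]
    linarith
  have hFl1 : F l1 < 0 := by
    have h2pa : 0 < 2 * Real.pi / a := by positivity
    have hl1ge1 : (1:ℝ) ≤ l1 := by
      rw [hl1def]; exact Real.one_le_exp (by linarith)
    have hlogl1 : Real.log (1 + l1) ≤ Real.log 2 + (lstar + 2 * Real.pi / a) := by
      have h12 : Real.log (1 + l1) ≤ Real.log (2 * l1) :=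
        Real.log_le_log (by linarith) (by linarith)
      have h2l : Real.log (2 * l1) = Real.log 2 + Real.log l1 :=
        Real.log_mul two_ne_zero hl1pos.ne'
      have hll : Real.log l1 = lstar + 2 * Real.pi / a := by rw [hl1def, Real.log_exp]
      linarith
    have hdiv : Real.log (1 + l1) / (4 * Real.pi) ≤
        (Real.log 2 + (lstar + 2 * Real.pi / a)) / (4 * Real.pi) := by gcongr
    have hsplit : (Real.log 2 + (lstar + 2 * Real.pi / a)) / (4 * Real.pi)
        = C' + (a / ε ^ 2 + c / ε + 1 / a) := by
      rw [hC'def, hlstardef]; field_simp; ring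
    have hCa : C' < a / ε ^ 2 := by
      rw [lt_div_iff₀ (by positivity)]; linarith
    have hce : c / ε < 0 := div_neg_of_neg_of_pos hc hε
    have hDinv : 1 / D l1 = -(2 * a / ε ^ 2) := by
      rw [hDl1]; field_simp
    simp only [hFdef]
    rw [hDinv]
    have hh : 2 * a / ε ^ 2 = 2 * (a / ε ^ 2) := by ring
    linarith
  have hFl2 : 0 < F l2 := by
    have hl2pos : 0 < l2 := by rw [hl2def]; exact Real.exp_pos _
    have hlogl2 : lstar + 1 + 4 * Real.pi / a + 16 * Real.pi ^ 2 / ε ^ 2 < Real.log (1 + l2) := by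
      have h1' : Real.log l2 < Real.log (1 + l2) := Real.log_lt_log hl2pos (by linarith)
      have h2' : Real.log l2 = lstar + 1 + 4 * Real.pi / a + 16 * Real.pi ^ 2 / ε ^ 2 := by
        rw [hl2def, Real.log_exp]
      linarith
    have hdivD : -(1 / (4 * Real.pi)) ≤ 1 / D l2 := by
      have := one_div_le_one_div_of_neg_of_le (show -(4 * Real.pi) < 0 by linarith) hDl2le
      have heq : 1 / (-(4 * Real.pi)) = -(1 / (4 * Real.pi)) := by ring
      linarith [heq ▸ this]
    have hdiv : (lstar + 1 + 4 * Real.pi / a + 16 * Real.pi ^ 2 / ε ^ 2) / (4 * Real.pi)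
        < Real.log (1 + l2) / (4 * Real.pi) := by gcongr
    have hsplit : (lstar + 1 + 4 * Real.pi / a + 16 * Real.pi ^ 2 / ε ^ 2) / (4 * Real.pi)
        = lstar / (4 * Real.pi) + 1 / (4 * Real.pi) + 1 / a + 4 * Real.pi / ε ^ 2 := by
      field_simp; ring
    have hls : 0 < lstar / (4 * Real.pi) := by positivity
    have hpe : 0 < 4 * Real.pi / ε ^ 2 := by positivity
    simp only [hFdef]
    linarith
  -- ordering of the key points
  have hl0M : l0 < M := by
    rw [hl0def, hMdef]
    apply Real.exp_lt_exp.mpr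
    have hx0le : x0 ≤ 4 * Real.pi / a - 4 * Real.pi * (a - c * ε) / ε ^ 2 - 1 := by rw [hx0def]; exact min_le_left _ _
    have hsp : 4 * Real.pi * (a - c * ε) / ε ^ 2 = 4 * Real.pi * a / ε ^ 2 - 4 * Real.pi * (c / ε) := by
      field_simp
    have hsp2 : 4 * Real.pi * (c / ε + 1 / a) = 4 * Real.pi * (c / ε) + 4 * Real.pi / a := by ring
    have hpos' : 0 < 4 * Real.pi * a / ε ^ 2 := by positivity
    linarith [hsp ▸ hx0le]
  have hl1l2 : l1 < l2 := by
    rw [hl1def, hl2def]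
    apply Real.exp_lt_exp.mpr
    have : 0 < 16 * Real.pi ^ 2 / ε ^ 2 := by positivity
    have h2pa : 0 < 2 * Real.pi / a := by positivity
    have h4pa : 2 * Real.pi / a ≤ 4 * Real.pi / a := by
      gcongr <;> linarith
    linarith
  -- the two roots via the intermediate value theorem
  have hroot2 : ∃ lam ∈ Ioo l0 M, F lam = 0 := by
    have hsub : ∀ l ∈ Icc l0 M, 0 < l ∧ D l ≠ 0 := by
      intro l hl
      have hpos : 0 < l := lt_of_lt_of_le hl0pos hl.1
      have hD' : D M ≤ D l := hanti l M hpos hl.2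
      rw [hDM] at hD'
      exact ⟨hpos, by linarith⟩
    have him := intermediate_value_Ioo hl0M.le (hFc _ hsub)
    obtain ⟨lam, hlam, hFlam⟩ := him ⟨hFl0, hFM⟩
    exact ⟨lam, hlam, hFlam⟩
  have hroot1 : ∃ lam ∈ Ioo l1 l2, F lam = 0 := by
    have hsub : ∀ l ∈ Icc l1 l2, 0 < l ∧ D l ≠ 0 := by
      intro l hl
      have hpos : 0 < l := lt_of_lt_of_le hl1pos hl.1
      have hD' : D l ≤ D l1 := hanti l1 l hl1pos hl.1
      exact ⟨hpos, by linarith⟩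
    have him := intermediate_value_Ioo hl1l2.le (hFc _ hsub)
    obtain ⟨lam, hlam, hFlam⟩ := him ⟨hFl1, hFl2⟩
    exact ⟨lam, hlam, hFlam⟩
  obtain ⟨lam₂, hlam₂mem, hFlam₂⟩ := hroot2
  obtain ⟨lam₁, hlam₁mem, hFlam₁⟩ := hroot1
  have hlam₂pos : 0 < lam₂ := lt_trans hl0pos hlam₂mem.1
  have hlam₁pos : 0 < lam₁ := lt_trans hl1pos hlam₁mem.1
  have hDlam₂pos : 0 < D lam₂ := by
    have := hantis lam₂ M hlam₂pos hlam₂mem.2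
    rw [hDM] at this
    linarith
  have hDlam₁neg : D lam₁ < 0 := by
    have := hantis l1 lam₁ hl1pos hlam₁mem.1
    linarith
  have habs : |c| = -c := abs_of_neg hc
  refine ⟨lam₁, lam₂, ?_, hlam₂pos, ?_, (hEq lam₁).mpr hFlam₁, (hEq lam₂).mpr hFlam₂, ?_, ?_, ?_, ?_⟩
  · -- exp lstar < lam₁
    have h2pa : 0 < 2 * Real.pi / a := by positivity
    have hexp : Real.exp (4 * Real.pi * (a / ε ^ 2 - |c| / ε + 1 / a)) < l1 := by
      rw [hl1def]
      apply Real.exp_lt_exp.mpr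
      rw [habs, hlstardef]
      have hpa : 0 < Real.pi * a⁻¹ := by positivity
      ring_nf
      linarith
    exact lt_trans hexp hlam₁mem.1
  · -- lam₂ < M
    have : Real.exp (4 * Real.pi * (-|c| / ε + 1 / a)) = M := by
      rw [hMdef, habs]; ring_nf
    rw [this]
    exact hlam₂mem.2
  · -- lam₁ ≠ lam₂
    intro h
    rw [h] at hDlam₁neg
    linarith
  · -- uniqueness
    intro lam hlam hlameq
    have hF : F lam = 0 := (hEq lam).mp hlameq
    rcases lt_trichotomy (D lam) 0 with hD | hD | hD
    · left
      rcases lt_trichotomy lam lam₁ with h | h | h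
      · exfalso
        have := hFmono lam lam₁ hlam h (Or.inr hD)
        rw [hF, hFlam₁] at this
        exact lt_irrefl 0 this
      · exact h
      · exfalso
        have := hFmono lam₁ lam hlam₁pos h (Or.inr hDlam₁neg)
        rw [hF, hFlam₁] at this
        exact lt_irrefl 0 this
    · exfalso
      have hz : a + c * ε - ε ^ 2 * (Real.log lam / (4 * Real.pi) - 1 / a) = 0 := by
        simp only [hDdef] at hD
        exact hD
      have heq2 : Real.log (1 + lam) / (4 * Real.pi) = 1 / a := by
        rw [hz] at hlameq
        simpa using hlameq
      have hloglam : Real.log lam / (4 * Real.pi) - 1 / a = (a + c * ε) / ε ^ 2 := by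
        rw [eq_div_iff (pow_ne_zero 2 hεne)]
        linear_combination -hz
      have hgt : 1 / a < Real.log lam / (4 * Real.pi) := by
        have := div_pos h1 (pow_pos hε 2)
        linarith
      have hlt : Real.log lam < Real.log (1 + lam) := Real.log_lt_log hlam (by linarith)
      have : Real.log lam / (4 * Real.pi) < Real.log (1 + lam) / (4 * Real.pi) := by gcongr
      linarith
    · right
      rcases lt_trichotomy lam lam₂ with h | h | h
      · exfalso
        have := hFmono lam lam₂ hlam h (Or.inl hDlam₂pos)
        rw [hF, hFlam₂] at this
        exact lt_irrefl 0 this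
      · exact h
      · exfalso
        have := hFmono lam₂ lam hlam₂pos h (Or.inl hD)
        rw [hF, hFlam₂] at this
        exact lt_irrefl 0 this
  · -- lower bound for -lam₂
    have hexp_eq : Real.exp (-(4 * Real.pi * |c|) / ε + 4 * Real.pi / a) = M := by
      rw [hMdef, habs]; congr 1; field_simp
    rw [hexp_eq]
    exact neg_lt_neg hlam₂mem.2
  · linarith
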